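/- Let F₀ : ℝ → ℝ be an odd, nondecreasing function that is convex on ℝ₊ (so F₀'(x) ≥ 0 for x ≥ 0 when differentiable, and F₀ satisfies F₀(x) ≤ (F₀(x−y) + F₀(x+y))/2 for all y ∈ ℝ and x ≥ 0). Then for any even probability density u on ℝ and any x ≥ 0, ∫₀^x (F₀ ∗ u)(y) dy ≥ 0, where (F₀ ∗ u)(y) = ∫_ℝ F₀(y − z) u(z) dz. -/
import Mathlib


open MeasureTheory

theorem convolution_integral_nonneg (F₀ : ℝ → ℝ)
    (hodd : ∀ x, F₀ (-x) = -F₀ x)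
    (hmono : Monotone F₀)
    (hconv : ∀ y : ℝ, ∀ x ≥ (0 : ℝ), F₀ x ≤ (F₀ (x - y) + F₀ (x + y)) / 2)
    (u : ℝ → ℝ) (hu_nonneg : ∀ x, 0 ≤ u x) (hu_even : ∀ x, u (-x) = u x)
    (hu_int : Integrable u) (hu_prob : ∫ x : ℝ, u x = 1)
    (hker : ∀ y : ℝ, Integrable (fun z => F₀ (y - z) * u z)) :
    ∀ x ≥ (0 : ℝ), 0 ≤ ∫ y in Set.Icc (0 : ℝ) x, ∫ z : ℝ, F₀ (y - z) * u z := by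
  have hF0 : F₀ 0 = 0 := by have := hodd 0; simp at this; linarith
  -- pointwise nonnegativity of the convolution for y ≥ 0
  have key : ∀ y ≥ (0 : ℝ), 0 ≤ ∫ z : ℝ, F₀ (y - z) * u z := by
    intro y hy
    have hplus_eq : (∫ z : ℝ, F₀ (y + z) * u z) = ∫ z : ℝ, F₀ (y - z) * u z := by
      have := MeasureTheory.integral_neg_eq_self (fun z => F₀ (y - z) * u z) volume
      simpa [hu_even, sub_neg_eq_add] using this
    have hplus_int : Integrable (fun z : ℝ => F₀ (y + z) * u z) := by
      have := (hker y).comp_neg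
      simpa [hu_even, sub_neg_eq_add] using this
    have hsum : F₀ y = F₀ y * ∫ z : ℝ, u z := by rw [hu_prob, mul_one]
    have hle : F₀ y * (∫ z : ℝ, u z) ≤
        ∫ z : ℝ, (F₀ (y - z) + F₀ (y + z)) / 2 * u z := by
      rw [← integral_const_mul]
      refine integral_mono (hu_int.const_mul _) ?_ ?_
      · have : Integrable (fun z : ℝ => (F₀ (y - z) * u z + F₀ (y + z) * u z) / 2) :=
          ((hker y).add hplus_int).div_const 2
        refine this.congr (Filter.Eventually.of_forall fun z => ?_)
        ring
      · intro z
        have h1 := hconv z y hy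
        have h2 := hu_nonneg z
        exact mul_le_mul_of_nonneg_right h1 h2
    have heq2 : (∫ z : ℝ, (F₀ (y - z) + F₀ (y + z)) / 2 * u z)
        = ∫ z : ℝ, F₀ (y - z) * u z := by
      have : (fun z : ℝ => (F₀ (y - z) + F₀ (y + z)) / 2 * u z)
          = fun z => (F₀ (y - z) * u z) / 2 + (F₀ (y + z) * u z) / 2 := by
        funext z; ring
      rw [this, integral_add ((hker y).div_const 2) (hplus_int.div_const 2),
        integral_div, integral_div, hplus_eq]
      ring
    have hFy : 0 ≤ F₀ y := by
      have := hmono hy; rwa [hF0] at this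
    calc (0:ℝ) ≤ F₀ y := hFy
      _ = F₀ y * ∫ z : ℝ, u z := hsum
      _ ≤ ∫ z : ℝ, (F₀ (y - z) + F₀ (y + z)) / 2 * u z := hle
      _ = ∫ z : ℝ, F₀ (y - z) * u z := heq2
  intro x hx
  refine setIntegral_nonneg measurableSet_Icc fun y hy => ?_
  exact key y hy.1
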